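/- Let L(ρ) = −i[H,ρ] + Σ_μ D_{L_μ}(ρ) be a Lindblad generator on matrices acting on ℂ^{n_A} ⊗ ℂ^{n_B}, with H Hermitian and L_μ arbitrary matrices on the tensor space. Then for every density matrix ρ_A on ℂ^{n_A}, the linear map ρ_B ↦ tr_A( L(ρ_A ⊗ ρ_B) ) is again of Lindblad form on ℂ^{n_B}: there exist a Hermitian matrix H_B and finitely many matrices X_j on ℂ^{n_B} such that tr_A( L(ρ_A ⊗ ρ_B) ) = −i[H_B, ρ_B] + Σ_j D_{X_j}(ρ_B) for every ρ_B. -/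

import Mathlib

open scoped Matrix ComplexOrder Kronecker

/-- The dissipator `D_X(ρ) = XρX† − (1/2)(X†Xρ + ρX†X)` (here on an arbitrary
finite index type). -/
noncomputable def dissipator {ι : Type*} [Fintype ι] (X ρ : Matrix ι ι ℂ) :
    Matrix ι ι ℂ :=
  X * ρ * Xᴴ - (1 / 2 : ℂ) • (Xᴴ * X * ρ + ρ * (Xᴴ * X))

/-- Partial trace over the first tensor factor:
`(tr_A M)_{j,j'} = Σ_i M_{(i,j),(i,j')}`. -/
noncomputable def ptraceA {nA nB : ℕ} (M : Matrix (Fin nA × Fin nB) (Fin nA × Fin nB) ℂ) :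
    Matrix (Fin nB) (Fin nB) ℂ :=
  fun j j' => ∑ i, M (i, j) (i, j')

namespace Stmt6Aux

variable {nA : ℕ}

/-- `Ei nB i = |i⟩ ⊗ I_B` as an `(nA·nB) × nB` matrix. -/
def Ei (nB : ℕ) (i : Fin nA) : Matrix (Fin nA × Fin nB) (Fin nB) ℂ :=
  fun p j => if p = (i, j) then 1 else 0

/-- `Wk nB B k = |w_k⟩ ⊗ I_B` where `w_k(i) = star (B k i)`. -/
def Wk (nB : ℕ) (B : Matrix (Fin nA) (Fin nA) ℂ) (k : Fin nA) :
    Matrix (Fin nA × Fin nB) (Fin nB) ℂ :=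
  fun p j => if p.2 = j then star (B k p.1) else 0

noncomputable def comp (nB : ℕ) (B : Matrix (Fin nA) (Fin nA) ℂ)
    (M : Matrix (Fin nA × Fin nB) (Fin nA × Fin nB) ℂ) : Matrix (Fin nB) (Fin nB) ℂ :=
  ∑ k, (Wk nB B k)ᴴ * M * Wk nB B k

noncomputable def Xc (nB : ℕ) (B : Matrix (Fin nA) (Fin nA) ℂ)
    (L : Matrix (Fin nA × Fin nB) (Fin nA × Fin nB) ℂ) (i k : Fin nA) :
    Matrix (Fin nB) (Fin nB) ℂ :=
  (Ei nB i)ᴴ * L * Wk nB B k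

lemma kron_eq (nB : ℕ) (B : Matrix (Fin nA) (Fin nA) ℂ) (ρB : Matrix (Fin nB) (Fin nB) ℂ) :
    (Bᴴ * B) ⊗ₖ ρB = ∑ k, Wk nB B k * ρB * (Wk nB B k)ᴴ := by
  ext ⟨i, j⟩ ⟨i', j'⟩
  simp only [Matrix.mul_apply, Matrix.kroneckerMap_apply, Wk, Matrix.sum_apply,
    Matrix.conjTranspose_apply, Finset.sum_mul, Finset.mul_sum, apply_ite]
  simp [Fintype.sum_prod_type, Finset.mul_sum, apply_ite]
  exact Finset.sum_congr rfl fun x _ => by ring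

lemma ptr_eq {nB : ℕ} (M : Matrix (Fin nA × Fin nB) (Fin nA × Fin nB) ℂ) :
    ptraceA M = ∑ i : Fin nA, (Ei nB i)ᴴ * M * Ei nB i := by
  ext j j'
  simp [ptraceA, Matrix.mul_apply, Ei, Matrix.sum_apply, Matrix.conjTranspose_apply,
    Fintype.sum_prod_type, apply_ite, Prod.ext_iff, ite_and, Finset.sum_ite_eq,
    Finset.sum_ite_eq']

lemma WE (nB : ℕ) (B : Matrix (Fin nA) (Fin nA) ℂ) (k i : Fin nA) :
    (Wk nB B k)ᴴ * Ei nB i = B k i • (1 : Matrix (Fin nB) (Fin nB) ℂ) := by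
  ext j j'
  simp [Matrix.mul_apply, Ei, Wk, Matrix.conjTranspose_apply, Fintype.sum_prod_type,
    apply_ite, Prod.ext_iff, ite_and, Finset.sum_ite_eq, Finset.sum_ite_eq',
    Matrix.one_apply, eq_comm]
  split_ifs <;> simp_all

lemma EW (nB : ℕ) (B : Matrix (Fin nA) (Fin nA) ℂ) (k i : Fin nA) :
    (Ei nB i)ᴴ * Wk nB B k = star (B k i) • (1 : Matrix (Fin nB) (Fin nB) ℂ) := by
  rw [← Matrix.conjTranspose_conjTranspose (Wk nB B k), ← Matrix.conjTranspose_mul, WE]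
  simp

lemma sum_EiEi (nB : ℕ) :
    ∑ i : Fin nA, (Ei nB i * (Ei nB i)ᴴ) = (1 : Matrix (Fin nA × Fin nB) (Fin nA × Fin nB) ℂ) := by
  ext ⟨a, b⟩ ⟨c, d⟩
  simp [Matrix.mul_apply, Ei, Matrix.sum_apply, Matrix.conjTranspose_apply, apply_ite,
    Prod.ext_iff, ite_and, Finset.sum_ite_eq, Finset.sum_ite_eq', Matrix.one_apply]
  split_ifs <;> simp_all

lemma sum_smul_Ei (nB : ℕ) (B : Matrix (Fin nA) (Fin nA) ℂ) (k : Fin nA) :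
    ∑ i, star (B k i) • Ei nB i = Wk nB B k := by
  ext ⟨a, b⟩ j
  simp [Ei, Wk, Matrix.sum_apply, apply_ite, Prod.ext_iff, ite_and, Finset.sum_ite_eq,
    Finset.sum_ite_eq']
  split_ifs <;> simp_all

lemma sum_smul_EiT (nB : ℕ) (B : Matrix (Fin nA) (Fin nA) ℂ) (k : Fin nA) :
    ∑ i, B k i • (Ei nB i)ᴴ = (Wk nB B k)ᴴ := by
  rw [← sum_smul_Ei nB B k, Matrix.conjTranspose_sum]
  simp

lemma compL (nB : ℕ) (B : Matrix (Fin nA) (Fin nA) ℂ)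
    (M : Matrix (Fin nA × Fin nB) (Fin nA × Fin nB) ℂ) (ρB : Matrix (Fin nB) (Fin nB) ℂ) :
    ptraceA (M * ((Bᴴ * B) ⊗ₖ ρB)) = comp nB B M * ρB := by
  rw [kron_eq, ptr_eq]
  calc ∑ i : Fin nA, (Ei nB i)ᴴ * (M * ∑ k, Wk nB B k * ρB * (Wk nB B k)ᴴ) * Ei nB i
      = ∑ i, ∑ k, B k i • ((Ei nB i)ᴴ * (M * (Wk nB B k * ρB))) := by
        refine Finset.sum_congr rfl fun i _ => ?_
        simp only [Matrix.mul_sum, Matrix.sum_mul]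
        refine Finset.sum_congr rfl fun k _ => ?_
        simp only [Matrix.mul_assoc, WE, Matrix.mul_smul, Matrix.mul_one]
    _ = ∑ k, ∑ i, B k i • ((Ei nB i)ᴴ * (M * (Wk nB B k * ρB))) := Finset.sum_comm
    _ = ∑ k, (∑ i, B k i • (Ei nB i)ᴴ) * (M * (Wk nB B k * ρB)) := by
        refine Finset.sum_congr rfl fun k _ => ?_
        rw [Matrix.sum_mul]
        exact Finset.sum_congr rfl fun i _ => (Matrix.smul_mul _ _ _).symm
    _ = comp nB B M * ρB := by
        rw [comp, Matrix.sum_mul]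
        refine Finset.sum_congr rfl fun k _ => ?_
        rw [sum_smul_EiT]
        simp only [Matrix.mul_assoc]

lemma compR (nB : ℕ) (B : Matrix (Fin nA) (Fin nA) ℂ)
    (M : Matrix (Fin nA × Fin nB) (Fin nA × Fin nB) ℂ) (ρB : Matrix (Fin nB) (Fin nB) ℂ) :
    ptraceA (((Bᴴ * B) ⊗ₖ ρB) * M) = ρB * comp nB B M := by
  rw [kron_eq, ptr_eq]
  calc ∑ i : Fin nA, (Ei nB i)ᴴ * ((∑ k, Wk nB B k * ρB * (Wk nB B k)ᴴ) * M) * Ei nB i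
      = ∑ i, ∑ k, star (B k i) • (ρB * ((Wk nB B k)ᴴ * (M * Ei nB i))) := by
        refine Finset.sum_congr rfl fun i _ => ?_
        simp only [Matrix.mul_sum, Matrix.sum_mul]
        refine Finset.sum_congr rfl fun k _ => ?_
        calc (Ei nB i)ᴴ * (Wk nB B k * ρB * (Wk nB B k)ᴴ * M) * Ei nB i
            = ((Ei nB i)ᴴ * Wk nB B k) * (ρB * ((Wk nB B k)ᴴ * (M * Ei nB i))) := by
              simp only [Matrix.mul_assoc]
          _ = star (B k i) • (ρB * ((Wk nB B k)ᴴ * (M * Ei nB i))) := by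
              rw [EW, Matrix.smul_mul, Matrix.one_mul]
    _ = ∑ k, ∑ i, star (B k i) • (ρB * ((Wk nB B k)ᴴ * (M * Ei nB i))) := Finset.sum_comm
    _ = ∑ k, ρB * ((Wk nB B k)ᴴ * (M * ∑ i, star (B k i) • Ei nB i)) := by
        refine Finset.sum_congr rfl fun k _ => ?_
        simp only [Matrix.mul_sum, Matrix.mul_smul]
    _ = ρB * comp nB B M := by
        rw [comp, Matrix.mul_sum]
        refine Finset.sum_congr rfl fun k _ => ?_
        rw [sum_smul_Ei]
        simp only [Matrix.mul_assoc]

lemma sandwich (nB : ℕ) (B : Matrix (Fin nA) (Fin nA) ℂ)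
    (L : Matrix (Fin nA × Fin nB) (Fin nA × Fin nB) ℂ) (ρB : Matrix (Fin nB) (Fin nB) ℂ) :
    ptraceA (L * ((Bᴴ * B) ⊗ₖ ρB) * Lᴴ)
      = ∑ i, ∑ k, Xc nB B L i k * ρB * (Xc nB B L i k)ᴴ := by
  rw [kron_eq, ptr_eq]
  refine Finset.sum_congr rfl fun i _ => ?_
  simp only [Matrix.mul_sum, Matrix.sum_mul]
  refine Finset.sum_congr rfl fun k _ => ?_
  simp only [Xc, Matrix.conjTranspose_mul, Matrix.conjTranspose_conjTranspose,
    Matrix.mul_assoc]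

lemma compLL (nB : ℕ) (B : Matrix (Fin nA) (Fin nA) ℂ)
    (L : Matrix (Fin nA × Fin nB) (Fin nA × Fin nB) ℂ) :
    comp nB B (Lᴴ * L) = ∑ i, ∑ k, (Xc nB B L i k)ᴴ * Xc nB B L i k := by
  have h := sum_EiEi (nA := nA) nB
  rw [comp, Finset.sum_comm]
  refine Finset.sum_congr rfl fun k _ => ?_
  calc (Wk nB B k)ᴴ * (Lᴴ * L) * Wk nB B k
      = (Wk nB B k)ᴴ * (Lᴴ * ((1 : Matrix (Fin nA × Fin nB) (Fin nA × Fin nB) ℂ)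
          * (L * Wk nB B k))) := by
        simp only [Matrix.one_mul, Matrix.mul_assoc]
    _ = ∑ i, (Xc nB B L i k)ᴴ * Xc nB B L i k := by
        rw [← h]
        simp only [Matrix.sum_mul, Matrix.mul_sum, Xc, Matrix.conjTranspose_mul,
          Matrix.conjTranspose_conjTranspose, Matrix.mul_assoc]

lemma comp_herm (nB : ℕ) (B : Matrix (Fin nA) (Fin nA) ℂ)
    {M : Matrix (Fin nA × Fin nB) (Fin nA × Fin nB) ℂ} (hM : M.IsHermitian) :
    (comp nB B M).IsHermitian := by
  rw [comp, Matrix.IsHermitian, Matrix.conjTranspose_sum]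
  refine Finset.sum_congr rfl fun k _ => ?_
  simp [Matrix.conjTranspose_mul, Matrix.mul_assoc, hM.eq]

lemma ptraceA_add {nB : ℕ} (M N : Matrix (Fin nA × Fin nB) (Fin nA × Fin nB) ℂ) :
    ptraceA (M + N) = ptraceA M + ptraceA N := by
  ext j j'; simp [ptraceA, Finset.sum_add_distrib]

lemma ptraceA_sub {nB : ℕ} (M N : Matrix (Fin nA × Fin nB) (Fin nA × Fin nB) ℂ) :
    ptraceA (M - N) = ptraceA M - ptraceA N := by
  ext j j'; simp [ptraceA, Finset.sum_sub_distrib]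

lemma ptraceA_smul {nB : ℕ} (c : ℂ) (M : Matrix (Fin nA × Fin nB) (Fin nA × Fin nB) ℂ) :
    ptraceA (c • M) = c • ptraceA M := by
  ext j j'; simp [ptraceA, Finset.mul_sum]

lemma ptraceA_sum {nB : ℕ} {α : Type*} [Fintype α]
    (f : α → Matrix (Fin nA × Fin nB) (Fin nA × Fin nB) ℂ) :
    ptraceA (∑ μ, f μ) = ∑ μ, ptraceA (f μ) := by
  ext j j'
  simp only [ptraceA, Matrix.sum_apply]
  exact Finset.sum_comm

lemma diss_ptrace (nB : ℕ) (B : Matrix (Fin nA) (Fin nA) ℂ)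
    (L : Matrix (Fin nA × Fin nB) (Fin nA × Fin nB) ℂ) (ρB : Matrix (Fin nB) (Fin nB) ℂ) :
    ptraceA (dissipator L ((Bᴴ * B) ⊗ₖ ρB)) = ∑ i, ∑ k, dissipator (Xc nB B L i k) ρB := by
  unfold dissipator
  rw [ptraceA_sub, ptraceA_smul, ptraceA_add, sandwich, compL, compR, compLL]
  simp only [Finset.sum_sub_distrib, Finset.sum_add_distrib, Finset.smul_sum, smul_add,
    Matrix.sum_mul, Matrix.mul_sum]

open scoped MatrixOrder in
lemma psd_eq_conjTranspose_mul_self {n : ℕ} (ρA : Matrix (Fin n) (Fin n) ℂ) (hpsd : ρA.PosSemidef) :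
    ∃ B : Matrix (Fin n) (Fin n) ℂ, ρA = Bᴴ * B := by
  obtain ⟨X, hX, -, hXX⟩ := CFC.exists_sqrt_of_isSelfAdjoint_of_quasispectrumRestricts hpsd.isHermitian
      (QuasispectrumRestricts.nnreal_of_nonneg hpsd.nonneg)
  refine ⟨X, ?_⟩
  rw [← hXX]
  exact congrArg (· * X) hX.star_eq.symm

end Stmt6Aux

open Stmt6Aux in
/-- for a Lindblad generator `L` on `ℂ^{n_A} ⊗ ℂ^{n_B}` and a density
matrix `ρ_A`, the map `ρ_B ↦ tr_A(L(ρ_A ⊗ ρ_B))` is again of Lindblad form on `ℂ^{n_B}`. -/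
theorem stmt6 {nA nB m : ℕ}
    (H : Matrix (Fin nA × Fin nB) (Fin nA × Fin nB) ℂ) (hH : H.IsHermitian)
    (Lop : Fin m → Matrix (Fin nA × Fin nB) (Fin nA × Fin nB) ℂ)
    (ρA : Matrix (Fin nA) (Fin nA) ℂ) (hpsd : ρA.PosSemidef) (htr : ρA.trace = 1) :
    ∃ HB : Matrix (Fin nB) (Fin nB) ℂ, HB.IsHermitian ∧
      ∃ (p : ℕ) (Xop : Fin p → Matrix (Fin nB) (Fin nB) ℂ),
        ∀ ρB : Matrix (Fin nB) (Fin nB) ℂ,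
          ptraceA ((-Complex.I) • (H * (ρA ⊗ₖ ρB) - (ρA ⊗ₖ ρB) * H)
              + ∑ μ, dissipator (Lop μ) (ρA ⊗ₖ ρB))
            = (-Complex.I) • (HB * ρB - ρB * HB) + ∑ j, dissipator (Xop j) ρB := by
  obtain ⟨B, hB⟩ := psd_eq_conjTranspose_mul_self ρA hpsd
  subst hB
  set e := Fintype.equivFin (Fin m × Fin nA × Fin nA) with he
  refine ⟨comp nB B H, comp_herm nB B hH, Fintype.card (Fin m × Fin nA × Fin nA),
    fun j => Xc nB B (Lop (e.symm j).1) (e.symm j).2.1 (e.symm j).2.2, fun ρB => ?_⟩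
  rw [ptraceA_add, ptraceA_smul, ptraceA_sub, ptraceA_sum, compL, compR]
  congr 1
  have h1 : ∀ μ : Fin m, ptraceA (dissipator (Lop μ) ((Bᴴ * B) ⊗ₖ ρB))
      = ∑ i, ∑ k, dissipator (Xc nB B (Lop μ) i k) ρB := fun μ => diss_ptrace nB B (Lop μ) ρB
  simp only [h1]
  have h2 : ∑ t : Fin m × Fin nA × Fin nA, dissipator (Xc nB B (Lop t.1) t.2.1 t.2.2) ρB
      = ∑ x : Fin m, ∑ i, ∑ k, dissipator (Xc nB B (Lop x) i k) ρB := by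
    rw [Fintype.sum_prod_type]
    refine Finset.sum_congr rfl fun x _ => ?_
    rw [Fintype.sum_prod_type]
  rw [← h2]
  exact Fintype.sum_equiv e _ _ (fun t => by simp)
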